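/- Let A ∈ ℝ^{n×n} and E ∈ ℝ^{n×n} be symmetric. Then the 2n×2n block matrix Ā = [[A, −E], [−E, 0]] is symmetric, and if E is invertible then Ā is invertible with the number of positive eigenvalues of Ā equal to n and the number of negative eigenvalues equal to n. -/

import Mathlib

open Matrix

section Aux

variable {ι : Type*} [Fintype ι] [DecidableEq ι]

/-- Quadratic form in terms of eigenvalues. -/
lemma quad_eq_sum_eigen {M : Matrix ι ι ℝ} (hM : M.IsHermitian) (x : ι → ℝ) :
    x ⬝ᵥ (M *ᵥ x) =
      ∑ i, hM.eigenvalues i *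
        ((star (hM.eigenvectorUnitary : Matrix ι ι ℝ) *ᵥ x) i) ^ 2 := by
  set U := (hM.eigenvectorUnitary : Matrix ι ι ℝ) with hU
  have hsU : star U = Uᵀ := by
    ext i j; simp [Matrix.star_eq_conjTranspose, Matrix.conjTranspose_apply]
  set y := star U *ᵥ x with hy
  have h1 : x ᵥ* U = y := by
    rw [hy, hsU, Matrix.mulVec_transpose]
  conv_lhs => rw [hM.spectral_theorem, Unitary.conjStarAlgAut_apply]
  rw [← Matrix.mulVec_mulVec, ← Matrix.mulVec_mulVec, Matrix.dotProduct_mulVec x U, h1]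
  have h2 : (Matrix.diagonal (RCLike.ofReal ∘ hM.eigenvalues) : Matrix ι ι ℝ) *ᵥ y
      = fun i => hM.eigenvalues i * y i := by
    ext i; simp [Matrix.mulVec_diagonal]
  rw [h2]
  simp only [dotProduct]
  exact Finset.sum_congr rfl fun i _ => by ring

end Aux

section Count

variable {ι : Type*} [Fintype ι] [DecidableEq ι]

lemma le_card_neg {k : ℕ} {M : Matrix ι ι ℝ} (hM : M.IsHermitian)
    (f : (Fin k → ℝ) →ₗ[ℝ] (ι → ℝ))
    (hf : ∀ x, x ≠ 0 → (f x) ⬝ᵥ (M *ᵥ (f x)) < 0) :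
    k ≤ (Finset.univ.filter fun i => hM.eigenvalues i < 0).card := by
  classical
  set U := (hM.eigenvectorUnitary : Matrix ι ι ℝ)
  set S := {i : ι // hM.eigenvalues i < 0}
  let φ : (Fin k → ℝ) →ₗ[ℝ] (S → ℝ) :=
    (LinearMap.funLeft ℝ ℝ (Subtype.val : S → ι)).comp
      ((Matrix.mulVecLin (star U)).comp f)
  have hφ : Function.Injective φ := by
    rw [injective_iff_map_eq_zero]
    intro x hx
    by_contra hx0
    have hq := hf x hx0
    rw [quad_eq_sum_eigen hM] at hq
    have hnn : (0:ℝ) ≤ ∑ i, hM.eigenvalues i * ((star U *ᵥ f x) i) ^ 2 := by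
      apply Finset.sum_nonneg
      intro i _
      by_cases hi : hM.eigenvalues i < 0
      · have : (star U *ᵥ f x) i = 0 := congrFun hx ⟨i, hi⟩
        simp [this]
      · exact mul_nonneg (le_of_not_gt hi) (sq_nonneg _)
    exact absurd hq (not_lt.2 hnn)
  have := LinearMap.finrank_le_finrank_of_injective hφ
  simpa [Module.finrank_pi, S, Fintype.card_subtype] using this

lemma le_card_pos {k : ℕ} {M : Matrix ι ι ℝ} (hM : M.IsHermitian)
    (f : (Fin k → ℝ) →ₗ[ℝ] (ι → ℝ))
    (hf : ∀ x, x ≠ 0 → (f x) ⬝ᵥ (M *ᵥ (f x)) > 0) :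
    k ≤ (Finset.univ.filter fun i => 0 < hM.eigenvalues i).card := by
  classical
  set U := (hM.eigenvectorUnitary : Matrix ι ι ℝ)
  set S := {i : ι // 0 < hM.eigenvalues i}
  let φ : (Fin k → ℝ) →ₗ[ℝ] (S → ℝ) :=
    (LinearMap.funLeft ℝ ℝ (Subtype.val : S → ι)).comp
      ((Matrix.mulVecLin (star U)).comp f)
  have hφ : Function.Injective φ := by
    rw [injective_iff_map_eq_zero]
    intro x hx
    by_contra hx0
    have hq := hf x hx0
    rw [quad_eq_sum_eigen hM] at hq
    have hnn : ∑ i, hM.eigenvalues i * ((star U *ᵥ f x) i) ^ 2 ≤ 0 := by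
      apply Finset.sum_nonpos
      intro i _
      by_cases hi : 0 < hM.eigenvalues i
      · have : (star U *ᵥ f x) i = 0 := congrFun hx ⟨i, hi⟩
        simp [this]
      · exact mul_nonpos_of_nonpos_of_nonneg (le_of_not_gt hi) (sq_nonneg _)
    exact absurd hq (not_lt.2 hnn)
  have := LinearMap.finrank_le_finrank_of_injective hφ
  simpa [Module.finrank_pi, S, Fintype.card_subtype] using this

end Count

/-- Graph-type embedding `u ↦ (u, B u)`. -/
def liftL {n : ℕ} (B : Matrix (Fin n) (Fin n) ℝ) :
    (Fin n → ℝ) →ₗ[ℝ] (Fin n ⊕ Fin n → ℝ) where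
  toFun u := Sum.elim u (B *ᵥ u)
  map_add' u v := by funext i; cases i <;> simp [Matrix.mulVec_add]
  map_smul' c u := by funext i; cases i <;> simp [Matrix.mulVec_smul]

lemma liftL_apply {n : ℕ} (B : Matrix (Fin n) (Fin n) ℝ) (u : Fin n → ℝ) :
    liftL B u = Sum.elim u (B *ᵥ u) := rfl

/-- The quadratic form of `Ā` on the graph of `v = E⁻¹(A u /2 + t u)`. -/
lemma quad_on_graph {n : ℕ} (A E : Matrix (Fin n) (Fin n) ℝ) (hE : E.IsSymm)
    (t : ℝ) (u v : Fin n → ℝ)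
    (hv : E *ᵥ v = (2:ℝ)⁻¹ • (A *ᵥ u) + t • u) :
    (Sum.elim u v) ⬝ᵥ ((fromBlocks A (-E) (-E) (0 : Matrix (Fin n) (Fin n) ℝ))
      *ᵥ (Sum.elim u v)) = -(2 * t) * (u ⬝ᵥ u) := by
  have hsym : v ⬝ᵥ (E *ᵥ u) = u ⬝ᵥ (E *ᵥ v) := by
    rw [Matrix.dotProduct_mulVec, ← Matrix.mulVec_transpose, hE.eq, dotProduct_comm]
  rw [Matrix.fromBlocks_mulVec]
  simp only [Sum.elim_comp_inl, Sum.elim_comp_inr, Matrix.zero_mulVec, add_zero,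
    sumElim_dotProduct_sumElim, Matrix.neg_mulVec, dotProduct_add,
    dotProduct_neg, Matrix.neg_mulVec]
  rw [hsym, hv]
  simp only [dotProduct_add, dotProduct_smul, smul_eq_mul]
  ring

theorem stmt_17 {n : ℕ}
    (A E : Matrix (Fin n) (Fin n) ℝ) (hA : A.IsSymm) (hE : E.IsSymm)
    (Abar : Matrix (Fin n ⊕ Fin n) (Fin n ⊕ Fin n) ℝ)
    (hAbar : Abar = fromBlocks A (-E) (-E) 0) :
    Abar.IsSymm ∧
    (IsUnit E.det →
      IsUnit Abar.det ∧
      ∀ (hherm : Abar.IsHermitian),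
        (Finset.univ.filter fun i => 0 < hherm.eigenvalues i).card = n ∧
        (Finset.univ.filter fun i => hherm.eigenvalues i < 0).card = n) := by
  constructor
  · rw [hAbar, Matrix.IsSymm, Matrix.fromBlocks_transpose]
    rw [Matrix.transpose_neg, Matrix.transpose_zero, hA.eq, hE.eq]
  intro hEd
  have hEinv : E * E⁻¹ = 1 := Matrix.mul_nonsing_inv E hEd
  have hdet : IsUnit Abar.det := by
    apply Matrix.isUnit_det_of_right_inverse
      (B := fromBlocks 0 (-E⁻¹) (-E⁻¹) (-(E⁻¹ * A * E⁻¹)))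
    rw [hAbar, Matrix.fromBlocks_multiply, ← Matrix.fromBlocks_one]
    have h12 : E * (E⁻¹ * A * E⁻¹) = A * E⁻¹ := by
      rw [← Matrix.mul_assoc, ← Matrix.mul_assoc, hEinv, Matrix.one_mul]
    simp [hEinv, h12]
  refine ⟨hdet, fun hherm => ?_⟩
  -- no zero eigenvalues
  have hnz : ∀ i, hherm.eigenvalues i ≠ 0 := by
    intro i h0
    have hd0 : Abar.det = 0 := by
      rw [hherm.det_eq_prod_eigenvalues]
      exact Finset.prod_eq_zero (Finset.mem_univ i) (by exact_mod_cast h0)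
    exact hdet.ne_zero hd0
  -- negative subspace
  have hneg : n ≤ (Finset.univ.filter fun i => hherm.eigenvalues i < 0).card := by
    apply le_card_neg hherm (liftL (E⁻¹ * ((2:ℝ)⁻¹ • A + (1:ℝ) • 1)))
    intro u hu
    rw [liftL_apply, hAbar, quad_on_graph A E hE 1 u _ ?_]
    · have h0 : u ⬝ᵥ u ≠ 0 := fun h => hu (dotProduct_self_eq_zero.1 h)
      have hge : 0 ≤ u ⬝ᵥ u := Finset.sum_nonneg (fun i _ => mul_self_nonneg _)
      nlinarith [lt_of_le_of_ne hge (Ne.symm h0)]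
    · rw [Matrix.mulVec_mulVec, ← Matrix.mul_assoc, hEinv, Matrix.one_mul,
        Matrix.add_mulVec, Matrix.smul_mulVec, Matrix.smul_mulVec,
        Matrix.one_mulVec]
  -- positive subspace
  have hpos : n ≤ (Finset.univ.filter fun i => 0 < hherm.eigenvalues i).card := by
    apply le_card_pos hherm (liftL (E⁻¹ * ((2:ℝ)⁻¹ • A + (-1:ℝ) • 1)))
    intro u hu
    rw [liftL_apply, hAbar, quad_on_graph A E hE (-1) u _ ?_]
    · have h0 : u ⬝ᵥ u ≠ 0 := fun h => hu (dotProduct_self_eq_zero.1 h)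
      have hge : 0 ≤ u ⬝ᵥ u := Finset.sum_nonneg (fun i _ => mul_self_nonneg _)
      nlinarith [lt_of_le_of_ne hge (Ne.symm h0)]
    · rw [Matrix.mulVec_mulVec, ← Matrix.mul_assoc, hEinv, Matrix.one_mul,
        Matrix.add_mulVec, Matrix.smul_mulVec, Matrix.smul_mulVec,
        Matrix.one_mulVec]
  -- the two sets are disjoint and live in a universe of size `2 * n`
  have hdisj : Disjoint (Finset.univ.filter fun i => 0 < hherm.eigenvalues i)
      (Finset.univ.filter fun i => hherm.eigenvalues i < 0) := by
    rw [Finset.disjoint_filter]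
    intro i _ h1 h2
    exact absurd (lt_trans h2 h1) (lt_irrefl _)
  have hle : (Finset.univ.filter fun i => 0 < hherm.eigenvalues i).card +
      (Finset.univ.filter fun i => hherm.eigenvalues i < 0).card ≤ n + n := by
    rw [← Finset.card_union_of_disjoint hdisj]
    calc _ ≤ (Finset.univ : Finset (Fin n ⊕ Fin n)).card := Finset.card_le_card
              (Finset.subset_univ _)
      _ = n + n := by simp [Finset.card_univ]
  exact ⟨le_antisymm (by omega) hpos, le_antisymm (by omega) hneg⟩
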